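/- The dual gauge of F_θ, defined by F_θ^o(x) = sup{ ⟨x, z⟩ / F_θ(z) : z ∈ 𝕊^{n−1} }, is given explicitly by F_θ^o(x) = |x|² / ( √(cos²θ ⟨x, Eₙ⟩² + sin²θ |x|²) − cos θ ⟨x, Eₙ⟩ ) for x ≠ 0, and F_θ^o(0) = 0. -/

import Mathlib

open MeasureTheory Real
noncomputable section
set_option linter.unusedVariables false
abbrev E (n : ℕ) := EuclideanSpace ℝ (Fin n)
def lastE (n : ℕ) (hn : 0 < n) : E n := EuclideanSpace.single ⟨n-1, by omega⟩ 1
def capGauge (n : ℕ) (hn : 0 < n) (θ : ℝ) (ξ : E n) : ℝ :=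
  ‖ξ‖ - Real.cos θ * (inner ℝ ξ (lastE n hn) : ℝ)
def capDual (n : ℕ) (hn : 0 < n) (θ : ℝ) (x : E n) : ℝ :=
  sSup {r : ℝ | ∃ z : E n, ‖z‖ = 1 ∧ r = (inner ℝ x z : ℝ) / capGauge n hn θ z}

set_option maxHeartbeats 1000000

/-- Explicit formula for the dual capillary gauge. -/
theorem capDual_formula (n : ℕ) (hn : 0 < n) (hn2 : 2 ≤ n) (θ : ℝ) (hθ : θ ∈ Set.Ioo 0 π) :
    capDual n hn θ 0 = 0 ∧
    ∀ x : E n, x ≠ 0 →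
      capDual n hn θ x = ‖x‖ ^ 2 /
        (Real.sqrt ((Real.cos θ) ^ 2 * (inner ℝ x (lastE n hn) : ℝ) ^ 2
            + (Real.sin θ) ^ 2 * ‖x‖ ^ 2)
          - Real.cos θ * (inner ℝ x (lastE n hn) : ℝ)) := by
  obtain ⟨hθ0, hθπ⟩ := hθ
  have hs : 0 < Real.sin θ := Real.sin_pos_of_pos_of_lt_pi hθ0 hθπ
  have hsc : Real.sin θ ^ 2 + Real.cos θ ^ 2 = 1 := Real.sin_sq_add_cos_sq θ
  have hE : ‖lastE n hn‖ = 1 := by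
    simp [lastE, EuclideanSpace.norm_single]
  have hgauge : ∀ z : E n, ‖z‖ = 1 → 0 < capGauge n hn θ z := by
    intro z hz
    have h1 : |(inner ℝ z (lastE n hn) : ℝ)| ≤ 1 := by
      have := abs_real_inner_le_norm z (lastE n hn)
      rw [hz, hE] at this; simpa using this
    have h2 : Real.cos θ * (inner ℝ z (lastE n hn) : ℝ) < 1 := by
      have := le_abs_self (Real.cos θ * (inner ℝ z (lastE n hn) : ℝ))
      rw [abs_mul] at this
      nlinarith [abs_nonneg (Real.cos θ), sq_abs (Real.cos θ)]
    simpa [capGauge, hz] using h2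
  constructor
  · have hset : {r : ℝ | ∃ z : E n, ‖z‖ = 1 ∧
        r = (inner ℝ (0 : E n) z : ℝ) / capGauge n hn θ z} = {0} := by
      ext r
      simp only [Set.mem_setOf_eq, Set.mem_singleton_iff]
      constructor
      · rintro ⟨z, hz, rfl⟩; simp
      · rintro rfl; exact ⟨lastE n hn, hE, by simp⟩
    rw [capDual, hset, csSup_singleton]
  · intro x hx
    set c := Real.cos θ with hc
    set s := Real.sin θ with hs'
    set a : ℝ := (inner ℝ x (lastE n hn) : ℝ) with ha
    have hN : 0 < ‖x‖ := norm_pos_iff.mpr hx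
    have hsN : 0 < s ^ 2 * ‖x‖ ^ 2 := by positivity
    set R : ℝ := Real.sqrt (c ^ 2 * a ^ 2 + s ^ 2 * ‖x‖ ^ 2) with hR
    have hQ : 0 < c ^ 2 * a ^ 2 + s ^ 2 * ‖x‖ ^ 2 := by positivity
    have hR2 : R ^ 2 = c ^ 2 * a ^ 2 + s ^ 2 * ‖x‖ ^ 2 := Real.sq_sqrt hQ.le
    have hR0 : 0 ≤ R := Real.sqrt_nonneg _
    have hD : 0 < R - c * a := by nlinarith [hsN, hR2, hR0]
    set M : ℝ := ‖x‖ ^ 2 / (R - c * a) with hM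
    have hMpos : 0 < M := div_pos (by positivity) hD
    have hMD : M * (R - c * a) = ‖x‖ ^ 2 := by
      rw [hM]; field_simp
    have hMs : M * s ^ 2 = R + c * a := by
      have h : M * s ^ 2 * (R - c * a) = (R + c * a) * (R - c * a) := by
        nlinarith [hMD, hR2]
      exact mul_right_cancel₀ hD.ne' h
    set y : E n := x + (M * c) • lastE n hn with hy
    have hxy : (inner ℝ x y : ℝ) = ‖x‖ ^ 2 + M * c * a := by
      rw [hy, inner_add_right, real_inner_smul_right, real_inner_self_eq_norm_sq, ← ha]
    have hyE : (inner ℝ y (lastE n hn) : ℝ) = a + M * c := by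
      rw [hy, inner_add_left, real_inner_smul_left, real_inner_self_eq_norm_sq, hE, ← ha]
      ring
    have hyz : ∀ z : E n, (inner ℝ y z : ℝ)
        = (inner ℝ x z : ℝ) + M * c * (inner ℝ z (lastE n hn) : ℝ) := by
      intro z
      rw [hy, inner_add_left, real_inner_smul_left, real_inner_comm (lastE n hn) z]
    have hy2 : ‖y‖ ^ 2 = M ^ 2 := by
      have hns := norm_add_sq_real x ((M * c) • lastE n hn)
      rw [real_inner_smul_right, ← ha, norm_smul, hE, mul_one, Real.norm_eq_abs] at hns
      rw [hy, hns]
      nlinarith [hMD, hMs, hsc, sq_abs (M * c)]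
    have hynorm : ‖y‖ = M := by
      have h := Real.sqrt_sq (norm_nonneg y)
      rw [hy2, Real.sqrt_sq hMpos.le] at h
      exact h.symm
    clear_value y
    clear hy
    have hxz0 : (inner ℝ x (M⁻¹ • y) : ℝ) = M⁻¹ * (‖x‖ ^ 2 + M * c * a) := by
      rw [real_inner_smul_right, hxy]
    have hz0E : (inner ℝ (M⁻¹ • y) (lastE n hn) : ℝ) = M⁻¹ * (a + M * c) := by
      rw [real_inner_smul_left, hyE]
    clear_value M R a c s
    have hz1 : ‖M⁻¹ • y‖ = 1 := by
      rw [norm_smul, hynorm, Real.norm_eq_abs, abs_of_pos (inv_pos.mpr hMpos),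
        inv_mul_cancel₀ hMpos.ne']
    have hgreat : IsGreatest {r : ℝ | ∃ z : E n, ‖z‖ = 1 ∧
        r = (inner ℝ x z : ℝ) / capGauge n hn θ z} M := by
      constructor
      · refine ⟨M⁻¹ • y, hz1, ?_⟩
        have hgz := hgauge _ hz1
        rw [eq_div_iff hgz.ne']
        have hgval : capGauge n hn θ (M⁻¹ • y) = 1 - c * (M⁻¹ * (a + M * c)) := by
          rw [capGauge, hz1, hz0E, ← hc]
        rw [hgval, hxz0]
        field_simp
        nlinarith [hMD, hMs, hsc]
      · rintro r ⟨z, hz, rfl⟩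
        have hgz := hgauge z hz
        rw [div_le_iff₀ hgz]
        have hCS : (inner ℝ y z : ℝ) ≤ M := by
          have h := real_inner_le_norm y z
          rw [hynorm, hz, mul_one] at h
          exact h
        have hgval : capGauge n hn θ z = 1 - c * (inner ℝ z (lastE n hn) : ℝ) := by
          rw [capGauge, hz, ← hc]
        rw [hgval]
        nlinarith [hCS, hyz z]
    rw [capDual, hgreat.csSup_eq]
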